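/- Let H > 1 and P > 1 be real numbers. For real parameters H and P, define L̂(η) = 1 − 1/P + (1 − 1/H²)·sinh²η and R₁(η) = cosh η + √(L̂(η)). Let V, r : (0,∞) → (0,∞) be differentiable functions satisfying V'(η)/V(η) = −(1/H²)·sinh η/R₁(η) and r'(η)/r(η) = 1/(P·R₁(η)·sinh η) for all η ∈ (0,∞). Then V and r are twice differentiable, r'(η) ≠ 0, and for all η ∈ (0,∞): (1/H²)·(1/r'(η))² = −(1/V(η))·(V''(η)·r'(η) − V'(η)·r''(η))/r'(η)³; that is, regarding η as a function of r, (1/H²)·(dη/dr)² = −(1/V)·d²V/dr². -/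

import Mathlib

open Real Set

/-- The 'simple and useful equality' (5.8): `(1/H²)(η_r)² = −(1/V)V_{rr}`,
expressed via the ODEs (5.6) and (5.7) for `V` and `r` as functions of `η`. -/
theorem stmt_17
    (H P : ℝ) (hH : 1 < H) (hP : 1 < P)
    (Lhat R₁ : ℝ → ℝ)
    (hLhat : ∀ η : ℝ, Lhat η = 1 - 1 / P + (1 - 1 / H ^ 2) * (Real.sinh η) ^ 2)
    (hR₁ : ∀ η : ℝ, R₁ η = Real.cosh η + Real.sqrt (Lhat η))
    (V r : ℝ → ℝ)
    (hVpos : ∀ η ∈ Ioi (0:ℝ), 0 < V η)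
    (hrpos : ∀ η ∈ Ioi (0:ℝ), 0 < r η)
    (hVdiff : ∀ η ∈ Ioi (0:ℝ), DifferentiableAt ℝ V η)
    (hrdiff : ∀ η ∈ Ioi (0:ℝ), DifferentiableAt ℝ r η)
    (hVode : ∀ η ∈ Ioi (0:ℝ),
      deriv V η / V η = -(1 / H ^ 2) * Real.sinh η / R₁ η)
    (hrode : ∀ η ∈ Ioi (0:ℝ),
      deriv r η / r η = 1 / (P * R₁ η * Real.sinh η)) :
    (∀ η ∈ Ioi (0:ℝ), DifferentiableAt ℝ (deriv V) η) ∧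
    (∀ η ∈ Ioi (0:ℝ), DifferentiableAt ℝ (deriv r) η) ∧
    (∀ η ∈ Ioi (0:ℝ), deriv r η ≠ 0) ∧
    (∀ η ∈ Ioi (0:ℝ),
      (1 / H ^ 2) * (1 / deriv r η) ^ 2
        = -(1 / V η) *
            ((deriv (deriv V) η * deriv r η - deriv V η * deriv (deriv r) η)
              / (deriv r η) ^ 3)) := by
  have hH0 : (0:ℝ) < H := lt_trans one_pos hH
  have hP0 : (0:ℝ) < P := lt_trans one_pos hP
  have hHne : H ≠ 0 := ne_of_gt hH0
  have hPne : P ≠ 0 := ne_of_gt hP0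
  -- positivity of Lhat everywhere
  have hLpos : ∀ t : ℝ, 0 < Lhat t := by
    intro t
    rw [hLhat]
    have h1 : 0 < 1 - 1 / P := by
      have : 1 / P < 1 := (div_lt_one hP0).2 hP
      linarith
    have h2 : 0 < 1 - 1 / H ^ 2 := by
      have hH2 : 1 < H ^ 2 := by nlinarith
      have : 1 / H ^ 2 < 1 := (div_lt_one (by positivity)).2 hH2
      linarith
    have h3 : 0 ≤ (1 - 1 / H ^ 2) * Real.sinh t ^ 2 := by positivity
    linarith
  have hR1pos : ∀ t : ℝ, 0 < R₁ t := by
    intro t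
    rw [hR₁]
    have h1 : 0 < Real.cosh t := Real.cosh_pos t
    have h2 : 0 ≤ Real.sqrt (Lhat t) := Real.sqrt_nonneg _
    linarith
  have hLfun : Lhat = fun t => 1 - 1 / P + (1 - 1 / H ^ 2) * (Real.sinh t) ^ 2 :=
    funext hLhat
  have hLdiff : ∀ t : ℝ, DifferentiableAt ℝ Lhat t := by
    intro t
    rw [hLfun]
    exact (differentiableAt_const _).add
      ((differentiableAt_const _).mul ((Real.differentiable_sinh t).pow 2))
  have hR1diff : ∀ t : ℝ, DifferentiableAt ℝ R₁ t := by
    intro t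
    have : DifferentiableAt ℝ (fun u => Real.cosh u + Real.sqrt (Lhat u)) t :=
      (Real.differentiable_cosh t).add ((hLdiff t).sqrt (ne_of_gt (hLpos t)))
    exact this.congr_of_eventuallyEq (Filter.Eventually.of_forall fun u => (hR₁ u))
  -- Pointwise ODE formulas
  have hVeq : ∀ t ∈ Ioi (0:ℝ),
      deriv V t = V t * (-(1 / H ^ 2) * Real.sinh t / R₁ t) := by
    intro t ht
    have h := hVode t ht
    rw [div_eq_iff (ne_of_gt (hVpos t ht))] at h
    rw [h]; ring
  have hreq : ∀ t ∈ Ioi (0:ℝ),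
      deriv r t = r t * (1 / (P * R₁ t * Real.sinh t)) := by
    intro t ht
    have h := hrode t ht
    rw [div_eq_iff (ne_of_gt (hrpos t ht))] at h
    rw [h]; ring
  -- key pointwise facts
  have key : ∀ η ∈ Ioi (0:ℝ), DifferentiableAt ℝ (deriv V) η ∧
      DifferentiableAt ℝ (deriv r) η ∧ deriv r η ≠ 0 ∧
      ((1 / H ^ 2) * (1 / deriv r η) ^ 2
        = -(1 / V η) *
            ((deriv (deriv V) η * deriv r η - deriv V η * deriv (deriv r) η)
              / (deriv r η) ^ 3)) := by
    intro η hη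
    have hη0 : (0:ℝ) < η := hη
    have hs : 0 < Real.sinh η := Real.sinh_pos_iff.2 hη0
    have hsne : Real.sinh η ≠ 0 := ne_of_gt hs
    have hR0 : 0 < R₁ η := hR1pos η
    have hR0ne : R₁ η ≠ 0 := ne_of_gt hR0
    have hv : 0 < V η := hVpos η hη
    have hvne : V η ≠ 0 := ne_of_gt hv
    have hr0 : 0 < r η := hrpos η hη
    have hr0ne : r η ≠ 0 := ne_of_gt hr0
    have hDne : P * R₁ η * Real.sinh η ≠ 0 := by positivity
    -- neighborhood equalities
    have hmem : Ioi (0:ℝ) ∈ nhds η := isOpen_Ioi.mem_nhds hη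
    have hVev : deriv V =ᶠ[nhds η]
        (fun t => V t * (-(1 / H ^ 2) * Real.sinh t / R₁ t)) :=
      Filter.eventually_of_mem hmem fun t ht => hVeq t ht
    have hrev : deriv r =ᶠ[nhds η]
        (fun t => r t * (1 / (P * R₁ t * Real.sinh t))) :=
      Filter.eventually_of_mem hmem fun t ht => hreq t ht
    -- derivative facts for building blocks
    have hsinh : HasDerivAt Real.sinh (Real.cosh η) η := Real.hasDerivAt_sinh η
    have hR1' : HasDerivAt R₁ (deriv R₁ η) η := (hR1diff η).hasDerivAt
    have hV' : HasDerivAt V (deriv V η) η := (hVdiff η hη).hasDerivAt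
    have hr' : HasDerivAt r (deriv r η) η := (hrdiff η hη).hasDerivAt
    -- derivative of F = V * f
    have hf1 : HasDerivAt (fun t => -(1 / H ^ 2) * Real.sinh t)
        (-(1 / H ^ 2) * Real.cosh η) η := hsinh.const_mul _
    have hf : HasDerivAt (fun t => -(1 / H ^ 2) * Real.sinh t / R₁ t)
        ((-(1 / H ^ 2) * Real.cosh η * R₁ η -
          -(1 / H ^ 2) * Real.sinh η * deriv R₁ η) / R₁ η ^ 2) η :=
      hf1.div hR1' hR0ne
    have hF : HasDerivAt (fun t => V t * (-(1 / H ^ 2) * Real.sinh t / R₁ t))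
        (deriv V η * (-(1 / H ^ 2) * Real.sinh η / R₁ η) +
          V η * ((-(1 / H ^ 2) * Real.cosh η * R₁ η -
            -(1 / H ^ 2) * Real.sinh η * deriv R₁ η) / R₁ η ^ 2)) η :=
      hV'.mul hf
    -- derivative of G = r * g
    have hD : HasDerivAt (fun t => P * R₁ t * Real.sinh t)
        (P * deriv R₁ η * Real.sinh η + P * R₁ η * Real.cosh η) η := by
      have := (hR1'.const_mul P).mul hsinh
      exact this
    have hg : HasDerivAt (fun t => 1 / (P * R₁ t * Real.sinh t))
        ((0 * (P * R₁ η * Real.sinh η) -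
          1 * (P * deriv R₁ η * Real.sinh η + P * R₁ η * Real.cosh η)) /
            (P * R₁ η * Real.sinh η) ^ 2) η :=
      (hasDerivAt_const η (1:ℝ)).div hD hDne
    have hG : HasDerivAt (fun t => r t * (1 / (P * R₁ t * Real.sinh t)))
        (deriv r η * (1 / (P * R₁ η * Real.sinh η)) +
          r η * ((0 * (P * R₁ η * Real.sinh η) -
            1 * (P * deriv R₁ η * Real.sinh η + P * R₁ η * Real.cosh η)) /
              (P * R₁ η * Real.sinh η) ^ 2)) η :=
      hr'.mul hg
    -- twice differentiability
    have hdV : DifferentiableAt ℝ (deriv V) η :=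
      hF.differentiableAt.congr_of_eventuallyEq hVev
    have hdr : DifferentiableAt ℝ (deriv r) η :=
      hG.differentiableAt.congr_of_eventuallyEq hrev
    -- second derivative values
    have hV'' : deriv (deriv V) η =
        deriv V η * (-(1 / H ^ 2) * Real.sinh η / R₁ η) +
          V η * ((-(1 / H ^ 2) * Real.cosh η * R₁ η -
            -(1 / H ^ 2) * Real.sinh η * deriv R₁ η) / R₁ η ^ 2) := by
      rw [hVev.deriv_eq]; exact hF.deriv
    have hr'' : deriv (deriv r) η =
        deriv r η * (1 / (P * R₁ η * Real.sinh η)) +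
          r η * ((0 * (P * R₁ η * Real.sinh η) -
            1 * (P * deriv R₁ η * Real.sinh η + P * R₁ η * Real.cosh η)) /
              (P * R₁ η * Real.sinh η) ^ 2) := by
      rw [hrev.deriv_eq]; exact hG.deriv
    -- nonvanishing of the first derivative of r
    have hr'pos : 0 < deriv r η := by
      rw [hreq η hη]
      positivity
    have hr'ne : deriv r η ≠ 0 := ne_of_gt hr'pos
    refine ⟨hdV, hdr, hr'ne, ?_⟩
    -- the key algebraic identity: R₁² + (1/H²) sinh² − 2 cosh R₁ + 1/P = 0
    have hq2 : Real.sqrt (Lhat η) ^ 2 = 1 - 1 / P + (1 - 1 / H ^ 2) * Real.sinh η ^ 2 := by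
      rw [Real.sq_sqrt (le_of_lt (hLpos η)), hLhat]
    have hc2 : Real.cosh η ^ 2 = Real.sinh η ^ 2 + 1 := Real.cosh_sq η
    have key1 : R₁ η ^ 2 + (1 / H ^ 2) * Real.sinh η ^ 2 -
        2 * Real.cosh η * R₁ η + 1 / P = 0 := by
      rw [hR₁]
      linear_combination hq2 - hc2
    -- the crucial cancellation: V'' r' − V' r'' = −(1/H²) V r'
    have hcancel : deriv (deriv V) η * deriv r η - deriv V η * deriv (deriv r) η
        = -(1 / H ^ 2) * V η * deriv r η := by
      rw [hV'', hr'', hVeq η hη, hreq η hη]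
      have expand : (V η * (-(1 / H ^ 2) * Real.sinh η / R₁ η) *
            (-(1 / H ^ 2) * Real.sinh η / R₁ η) +
          V η * ((-(1 / H ^ 2) * Real.cosh η * R₁ η -
            -(1 / H ^ 2) * Real.sinh η * deriv R₁ η) / R₁ η ^ 2)) *
          (r η * (1 / (P * R₁ η * Real.sinh η))) -
        V η * (-(1 / H ^ 2) * Real.sinh η / R₁ η) *
          (r η * (1 / (P * R₁ η * Real.sinh η)) * (1 / (P * R₁ η * Real.sinh η)) +
            r η * ((0 * (P * R₁ η * Real.sinh η) -
              1 * (P * deriv R₁ η * Real.sinh η + P * R₁ η * Real.cosh η)) /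
                (P * R₁ η * Real.sinh η) ^ 2))
        = (1 / H ^ 2) * V η * r η / (P * R₁ η ^ 3 * Real.sinh η) *
            (R₁ η ^ 2 + (1 / H ^ 2) * Real.sinh η ^ 2 -
              2 * Real.cosh η * R₁ η + 1 / P)
            - (1 / H ^ 2) * V η * (r η * (1 / (P * R₁ η * Real.sinh η))) := by
        field_simp
        ring
      rw [expand, key1]
      ring
    rw [hcancel]
    field_simp
  exact ⟨fun η hη => (key η hη).1, fun η hη => (key η hη).2.1,
    fun η hη => (key η hη).2.2.1, fun η hη => (key η hη).2.2.2⟩
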